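/- Let F be a linear functional on n×n real matrices with I ∈ argmax_{SO(n)} F. Then 𝓡 = argmax_{SO(n)} F equals {I} if and only if F(W²) < 0 for every nonzero skew-symmetric matrix W. -/

import Mathlib

open Matrix
noncomputable section

variable {n : ℕ}

abbrev Mat (n : ℕ) := Matrix (Fin n) (Fin n) ℝ

lemma tmul_self_zero {A : Mat n} (h : Aᵀ * A = 0) : A = 0 := by
  rw [← conjTranspose_eq_transpose_of_trivial] at h
  exact conjTranspose_mul_self_eq_zero.mp h

lemma skew_det_one_sub_ne {V : Mat n} (hV : Vᵀ = -V) : (1 - V).det ≠ 0 := by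
  have key : (1 + V) * (1 - V) = 1 + Vᵀ * V := by
    rw [hV]; noncomm_ring
  have hpd : Matrix.PosDef (1 + Vᵀ * V) := by
    have h1 : Matrix.PosDef (1 : Mat n) := Matrix.PosDef.one
    have h2 : Matrix.PosSemidef (Vᵀ * V) := by
      rw [← conjTranspose_eq_transpose_of_trivial]
      exact posSemidef_conjTranspose_mul_self V
    exact h1.add_posSemidef h2
  have hdet : (1 + V).det * (1 - V).det = (1 + Vᵀ * V).det := by
    rw [← det_mul, key]
  have h4 : (1 + V).det = (1 - V).det := by
    rw [← det_transpose (1 + V), transpose_add, hV, transpose_one, ← sub_eq_add_neg]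
  intro h0
  rw [h4, h0, mul_zero] at hdet
  exact absurd hdet.symm (ne_of_gt hpd.det_pos)

lemma skew_det_one_add_ne {V : Mat n} (hV : Vᵀ = -V) : (1 + V).det ≠ 0 := by
  have hV' : (-V)ᵀ = -(-V) := by rw [transpose_neg, hV, neg_neg]
  have := skew_det_one_sub_ne hV'
  simpa using this

lemma smul_skew {V : Mat n} (t : ℝ) (hV : Vᵀ = -V) : (t • V)ᵀ = -(t • V) := by
  rw [transpose_smul, hV, smul_neg]

def SO (n : ℕ) : Set (Matrix (Fin n) (Fin n) ℝ) :=
  {R | Rᵀ * R = 1 ∧ R.det = 1}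

lemma cayley_mem_SO {V : Mat n} (hV : Vᵀ = -V) : (1 + V) * (1 - V)⁻¹ ∈ SO n := by
  have hd1 : IsUnit (1 - V).det := isUnit_iff_ne_zero.mpr (skew_det_one_sub_ne hV)
  have hd2 : IsUnit (1 + V).det := isUnit_iff_ne_zero.mpr (skew_det_one_add_ne hV)
  constructor
  · have ht : ((1 + V) * (1 - V)⁻¹)ᵀ = (1 + V)⁻¹ * (1 - V) := by
      rw [transpose_mul, transpose_nonsing_inv, transpose_sub, transpose_add, hV,
        transpose_one, sub_neg_eq_add, ← sub_eq_add_neg]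
    rw [ht]
    have hcomm : (1 - V) * (1 + V) = (1 + V) * (1 - V) := by noncomm_ring
    calc (1 + V)⁻¹ * (1 - V) * ((1 + V) * (1 - V)⁻¹)
        = (1 + V)⁻¹ * ((1 - V) * (1 + V)) * (1 - V)⁻¹ := by noncomm_ring
      _ = (1 + V)⁻¹ * (1 + V) * ((1 - V) * (1 - V)⁻¹) := by rw [hcomm]; noncomm_ring
      _ = 1 := by rw [nonsing_inv_mul _ hd2, mul_nonsing_inv _ hd1, one_mul]
  · rw [det_mul, det_nonsing_inv, Ring.inverse_eq_inv']
    have h4 : (1 + V).det = (1 - V).det := by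
      rw [← det_transpose (1 + V), transpose_add, hV, transpose_one, ← sub_eq_add_neg]
    rw [h4]
    exact mul_inv_cancel₀ (skew_det_one_sub_ne hV)

lemma cayley_sub_one {V : Mat n} (hV : Vᵀ = -V) :
    (1 + V) * (1 - V)⁻¹ - 1 = (2 • V) * (1 - V)⁻¹ := by
  have hd1 : IsUnit (1 - V).det := isUnit_iff_ne_zero.mpr (skew_det_one_sub_ne hV)
  calc (1 + V) * (1 - V)⁻¹ - 1 = (1 + V) * (1 - V)⁻¹ - (1 - V) * (1 - V)⁻¹ := by
        rw [mul_nonsing_inv _ hd1]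
    _ = (2 • V) * (1 - V)⁻¹ := by
        rw [two_smul]
        noncomm_ring

def optRot (n : ℕ) (F : Matrix (Fin n) (Fin n) ℝ →ₗ[ℝ] ℝ) :
    Set (Matrix (Fin n) (Fin n) ℝ) :=
  {R | R ∈ SO n ∧ ∀ Q ∈ SO n, F Q ≤ F R}

lemma first_second_order {F : Mat n →ₗ[ℝ] ℝ} (hI : (1 : Mat n) ∈ optRot n F)
    {V : Mat n} (hV : Vᵀ = -V) : F V = 0 ∧ F (V * V) ≤ 0 := by
  have hdet : ∀ t : ℝ, (1 - t • V).det ≠ 0 := fun t => skew_det_one_sub_ne (smul_skew t hV)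
  have hF : Continuous F := F.continuous_of_finiteDimensional
  have hcont : ∀ A : Mat n, Continuous (fun t : ℝ => F (A * (1 - t • V)⁻¹)) := by
    intro A
    have h1 : Continuous (fun t : ℝ => (1 - t • V : Mat n)) :=
      continuous_const.sub (continuous_id.smul continuous_const)
    have heq : (fun t : ℝ => F (A * (1 - t • V)⁻¹))
        = fun t => ((1 - t • V).det)⁻¹ * F (A * (1 - t • V).adjugate) := by
      funext t
      rw [inv_def, Ring.inverse_eq_inv', mul_smul_comm, _root_.map_smul, smul_eq_mul]
    rw [heq]
    exact (h1.matrix_det.inv₀ hdet).mul (hF.comp (continuous_const.matrix_mul h1.matrix_adjugate))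
  have hineq : ∀ t : ℝ, (2 * t) * F (V * (1 - t • V)⁻¹) ≤ 0 := by
    intro t
    have hle := hI.2 _ (cayley_mem_SO (smul_skew t hV))
    have h2 : F ((1 + t • V) * (1 - t • V)⁻¹ - 1) ≤ 0 := by
      rw [map_sub]; linarith
    rw [cayley_sub_one (smul_skew t hV)] at h2
    calc (2 * t) * F (V * (1 - t • V)⁻¹) = F ((2 • t • V) * (1 - t • V)⁻¹) := by
          rw [two_smul, add_mul, map_add, smul_mul_assoc, _root_.map_smul, smul_eq_mul]
          ring
      _ ≤ 0 := h2
  have hsplit : ∀ t : ℝ, V * (1 - t • V)⁻¹ = V + t • (V * V * (1 - t • V)⁻¹) := by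
    intro t
    have hu : IsUnit (1 - t • V).det := isUnit_iff_ne_zero.mpr (hdet t)
    calc V * (1 - t • V)⁻¹ = (V * (1 - t • V) + t • (V * V)) * (1 - t • V)⁻¹ := by
          rw [mul_sub, mul_one, mul_smul_comm]
          noncomm_ring
      _ = V * ((1 - t • V) * (1 - t • V)⁻¹) + t • (V * V * (1 - t • V)⁻¹) := by
          rw [add_mul, smul_mul_assoc, mul_assoc]
      _ = V + t • (V * V * (1 - t • V)⁻¹) := by rw [mul_nonsing_inv _ hu, mul_one]
  have hg0 : F (V * (1 - (0:ℝ) • V)⁻¹) = F V := by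
    norm_num
  have hFV : F V = 0 := by
    have hle1 : F V ≤ 0 := by
      rw [← hg0]
      refine le_of_tendsto (((hcont V).tendsto 0).mono_left nhdsWithin_le_nhds)
        (eventually_nhdsWithin_of_forall fun t (ht : t ∈ Set.Ioi (0:ℝ)) => ?_)
      have := hineq t
      have h2t : 0 < 2 * t := by simp at ht; linarith
      nlinarith
    have hle2 : 0 ≤ F V := by
      rw [← hg0]
      refine ge_of_tendsto (((hcont V).tendsto 0).mono_left nhdsWithin_le_nhds)
        (eventually_nhdsWithin_of_forall fun t (ht : t ∈ Set.Iio (0:ℝ)) => ?_)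
      have := hineq t
      have h2t : 2 * t < 0 := by simp at ht; linarith
      nlinarith
    linarith
  refine ⟨hFV, ?_⟩
  have hh : ∀ t : ℝ, 0 < t → F (V * V * (1 - t • V)⁻¹) ≤ 0 := by
    intro t ht
    have h1 := hineq t
    rw [hsplit t, map_add, _root_.map_smul, hFV, zero_add, smul_eq_mul] at h1
    nlinarith [mul_pos ht ht]
  have hg0' : F (V * V * (1 - (0:ℝ) • V)⁻¹) = F (V * V) := by norm_num
  rw [← hg0']
  refine le_of_tendsto (((hcont (V * V)).tendsto 0).mono_left nhdsWithin_le_nhds)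
    (eventually_nhdsWithin_of_forall fun t (ht : t ∈ Set.Ioi (0:ℝ)) => hh t ht)

section matfun

variable {S : Mat n}

/-- The orthogonal eigenvector matrix of a real symmetric matrix. -/
def egU (hS : S.IsHermitian) : Mat n := (Matrix.IsHermitian.eigenvectorUnitary hS : Mat n)

lemma egU_mul_star (hS : S.IsHermitian) : egU hS * star (egU hS) = 1 :=
  mem_unitaryGroup_iff.mp (Matrix.IsHermitian.eigenvectorUnitary hS).2

lemma star_mul_egU (hS : S.IsHermitian) : star (egU hS) * egU hS = 1 :=
  mem_unitaryGroup_iff'.mp (Matrix.IsHermitian.eigenvectorUnitary hS).2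

lemma spectral (hS : S.IsHermitian) :
    S = egU hS * diagonal hS.eigenvalues * star (egU hS) := by
  have h := hS.spectral_theorem
  have h2 : (RCLike.ofReal ∘ hS.eigenvalues : Fin n → ℝ) = hS.eigenvalues := by
    funext i
    simp [RCLike.ofReal_real_eq_id]
  rw [h2] at h
  exact h

/-- Functional calculus for real symmetric matrices. -/
def matfun (hS : S.IsHermitian) (f : ℝ → ℝ) : Mat n :=
  egU hS * diagonal (fun i => f (hS.eigenvalues i)) * star (egU hS)

lemma matfun_mul (hS : S.IsHermitian) (f g : ℝ → ℝ) :
    matfun hS f * matfun hS g = matfun hS (fun x => f x * g x) := by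
  unfold matfun
  calc egU hS * diagonal (fun i => f (hS.eigenvalues i)) * star (egU hS) *
        (egU hS * diagonal (fun i => g (hS.eigenvalues i)) * star (egU hS))
      = egU hS * (diagonal (fun i => f (hS.eigenvalues i)) * ((star (egU hS) * egU hS) *
          diagonal (fun i => g (hS.eigenvalues i)))) * star (egU hS) := by
        simp only [Matrix.mul_assoc]
    _ = egU hS * diagonal (fun i => f (hS.eigenvalues i) * g (hS.eigenvalues i)) * star (egU hS) := by
        rw [star_mul_egU, Matrix.one_mul, diagonal_mul_diagonal]

lemma matfun_congr (hS : S.IsHermitian) {f g : ℝ → ℝ}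
    (h : ∀ i, f (hS.eigenvalues i) = g (hS.eigenvalues i)) : matfun hS f = matfun hS g := by
  unfold matfun
  rw [show (fun i => f (hS.eigenvalues i)) = (fun i => g (hS.eigenvalues i)) from funext h]

lemma matfun_transpose (hS : S.IsHermitian) (f : ℝ → ℝ) : (matfun hS f)ᵀ = matfun hS f := by
  unfold matfun
  rw [star_eq_conjTranspose, conjTranspose_eq_transpose_of_trivial, transpose_mul, transpose_mul,
    transpose_transpose, diagonal_transpose, Matrix.mul_assoc]


lemma matfun_add (hS : S.IsHermitian) (f g : ℝ → ℝ) :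
    matfun hS (fun x => f x + g x) = matfun hS f + matfun hS g := by
  unfold matfun
  rw [← diagonal_add, Matrix.mul_add, Matrix.add_mul]

lemma matfun_affine (hS : S.IsHermitian) (a b : ℝ) :
    matfun hS (fun x => a * x + b) = a • S + b • 1 := by
  have hd : (diagonal fun i => a * hS.eigenvalues i + b)
      = a • diagonal hS.eigenvalues + b • (1 : Mat n) := by
    ext i j
    by_cases hij : i = j <;>
      simp [Matrix.diagonal_apply, Matrix.one_apply, hij]
  unfold matfun
  rw [hd, Matrix.mul_add, Matrix.add_mul, Matrix.mul_smul, Matrix.smul_mul, Matrix.mul_smul,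
    Matrix.smul_mul, Matrix.mul_one, egU_mul_star, ← spectral hS]

lemma matfun_id (hS : S.IsHermitian) : matfun hS (fun x => x) = S := by
  refine (matfun_congr hS (f := fun x => x) (g := fun x => 1 * x + 0) fun i => by ring).trans ?_
  simpa using matfun_affine hS 1 0

end matfun
section matfun2

variable {S : Mat n}

lemma matfun_zero (hS : S.IsHermitian) : matfun hS (fun _ => 0) = 0 := by
  unfold matfun
  simp

lemma matfun_det (hS : S.IsHermitian) (f : ℝ → ℝ) :
    (matfun hS f).det = ∏ i, f (hS.eigenvalues i) := by
  unfold matfun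
  calc (egU hS * diagonal (fun i => f (hS.eigenvalues i)) * star (egU hS)).det
      = (egU hS).det * (diagonal fun i => f (hS.eigenvalues i)).det * (star (egU hS)).det := by
        rw [det_mul, det_mul]
    _ = (star (egU hS) * egU hS).det * (diagonal fun i => f (hS.eigenvalues i)).det := by
        rw [det_mul]; ring
    _ = ∏ i, f (hS.eigenvalues i) := by
        rw [star_mul_egU hS, det_one, one_mul, det_diagonal]

lemma matfun_comm (hS : S.IsHermitian) (f : ℝ → ℝ) {K : Mat n} (hK : K * S = S * K) :
    K * matfun hS f = matfun hS f * K := by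
  set U := egU hS with hU
  set K' := star U * K * U with hK'
  have hKD : K' * diagonal hS.eigenvalues = diagonal hS.eigenvalues * K' := by
    have h1 : K' * diagonal hS.eigenvalues = star U * (K * S) * U := by
      conv_rhs => rw [spectral hS]
      rw [hK']
      simp only [Matrix.mul_assoc]
      rw [star_mul_egU hS, Matrix.mul_one]
    have h2 : diagonal hS.eigenvalues * K' = star U * (S * K) * U := by
      conv_rhs => rw [spectral hS]
      rw [hK', ← Matrix.one_mul (diagonal hS.eigenvalues * (star U * K * U)),
        ← star_mul_egU hS]
      simp only [Matrix.mul_assoc]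
      rfl
    rw [h1, h2, hK]
  have hent : ∀ i j, K' i j * hS.eigenvalues j = hS.eigenvalues i * K' i j := by
    intro i j
    have := congrFun (congrFun hKD i) j
    rwa [Matrix.mul_diagonal, Matrix.diagonal_mul] at this
  have hfd : K' * diagonal (fun i => f (hS.eigenvalues i))
      = diagonal (fun i => f (hS.eigenvalues i)) * K' := by
    ext i j
    rw [Matrix.mul_diagonal, Matrix.diagonal_mul]
    rcases eq_or_ne (hS.eigenvalues i) (hS.eigenvalues j) with h | h
    · rw [h]; ring
    · have h0 : K' i j = 0 := by
        by_contra h2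
        apply h
        have h1 := hent i j
        rw [mul_comm] at h1
        exact mul_right_cancel₀ h2 h1.symm
      rw [h0]; ring
  have hKid : U * K' * star U = K := by
    rw [hK']
    calc U * (star U * K * U) * star U = (U * star U) * K * (U * star U) := by
          simp only [Matrix.mul_assoc]
      _ = K := by rw [egU_mul_star hS, Matrix.one_mul, Matrix.mul_one]
  calc K * matfun hS f
      = (U * K' * star U) * (U * diagonal (fun i => f (hS.eigenvalues i)) * star U) := by
        rw [hKid]; rfl
    _ = U * (K' * ((star U * U) * diagonal (fun i => f (hS.eigenvalues i)))) * star U := by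
        simp only [Matrix.mul_assoc]
    _ = U * (K' * diagonal (fun i => f (hS.eigenvalues i))) * star U := by
        rw [star_mul_egU hS, Matrix.one_mul]
    _ = U * (diagonal (fun i => f (hS.eigenvalues i)) * ((star U * U) * K')) * star U := by
        rw [star_mul_egU hS, Matrix.one_mul, hfd]
    _ = (U * diagonal (fun i => f (hS.eigenvalues i)) * star U) * (U * K' * star U) := by
        simp only [Matrix.mul_assoc]
    _ = matfun hS f * K := by rw [hKid]; rfl

lemma eig_bound (hS : S.IsHermitian) {a b : ℝ} (hP : (a • S + b • (1 : Mat n)).PosSemidef)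
    (i : Fin n) : 0 ≤ a * hS.eigenvalues i + b := by
  set U := egU hS with hU
  set v : Fin n → ℝ := fun j => U j i with hv
  have h1 : (star U * U) i i = dotProduct (star v) v := by
    simp [Matrix.mul_apply, dotProduct, star_eq_conjTranspose, Matrix.conjTranspose_apply, hv,
      mul_comm]
  have hv1 : dotProduct (star v) v = 1 := by
    rw [← h1, star_mul_egU hS]
    simp [Matrix.one_apply]
  have hSU : S * U = U * diagonal hS.eigenvalues := by
    conv_lhs => rw [spectral hS]
    simp only [Matrix.mul_assoc]
    rw [star_mul_egU hS, Matrix.mul_one]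
  have hSv : S *ᵥ v = hS.eigenvalues i • v := by
    funext j
    have h2 : (S *ᵥ v) j = (S * U) j i := by
      simp [Matrix.mulVec, Matrix.mul_apply, dotProduct, hv]
    rw [h2, hSU, Matrix.mul_diagonal]
    simp [hv, mul_comm]
  have hquad := hP.dotProduct_mulVec_nonneg v
  rw [add_mulVec, smul_mulVec, smul_mulVec, one_mulVec, hSv] at hquad
  rw [dotProduct_add, dotProduct_smul, dotProduct_smul, dotProduct_smul, hv1] at hquad
  simpa [smul_eq_mul] using hquad

end matfun2
section construct

lemma sq_skew_isHermitian {W : Mat n} (hW : Wᵀ = -W) : (W * W).IsHermitian := by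
  rw [Matrix.IsHermitian, conjTranspose_eq_transpose_of_trivial, transpose_mul, hW, neg_mul_neg]

lemma exists_rot_of_skew {W : Mat n} (hW : Wᵀ = -W) :
    ∃ (R : Mat n) (s : ℝ), 0 < s ∧ R ∈ SO n ∧
      R + Rᵀ = (2:ℝ) • (1 : Mat n) + s • (W * W) := by
  have hG : (W * W).IsHermitian := sq_skew_isHermitian hW
  have hPSD : ((-1:ℝ) • (W * W) + (0:ℝ) • (1 : Mat n)).PosSemidef := by
    have h1 : ((-1:ℝ) • (W * W) + (0:ℝ) • (1 : Mat n)) = Wᵀ * W := by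
      rw [hW]
      simp [neg_mul]
    rw [h1, ← conjTranspose_eq_transpose_of_trivial]
    exact posSemidef_conjTranspose_mul_self W
  have heig : ∀ i, hG.eigenvalues i ≤ 0 := by
    intro i
    have := eig_bound hG hPSD i
    linarith
  set T : ℝ := ∑ i, |hG.eigenvalues i| with hT
  have hT0 : 0 ≤ T := Finset.sum_nonneg fun i _ => abs_nonneg _
  have hTi : ∀ i, |hG.eigenvalues i| ≤ T := by
    intro i
    rw [hT]
    exact Finset.single_le_sum (f := fun j => |hG.eigenvalues j|) (fun j _ => abs_nonneg _)
      (Finset.mem_univ i)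
  set s : ℝ := 4 / (1 + T) with hs
  have h1T : (0:ℝ) < 1 + T := by linarith
  have hs0 : 0 < s := by positivity
  have hs4 : s / 4 = 1 / (1 + T) := by
    rw [hs]; field_simp
  have hbound : ∀ i, 0 ≤ 1 + (s/4) * hG.eigenvalues i := by
    intro i
    rw [hs4]
    have h2 : -T ≤ hG.eigenvalues i := neg_le_of_abs_le (hTi i)
    have h3 : 1 + 1 / (1 + T) * hG.eigenvalues i = ((1 + T) + hG.eigenvalues i) / (1 + T) := by
      field_simp
    rw [h3]
    apply div_nonneg _ h1T.le
    linarith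
  set B : Mat n := matfun hG (fun x => Real.sqrt (1 + (s/4) * x)) with hB
  have hWcomm : W * (W * W) = (W * W) * W := by noncomm_ring
  have hBcomm : W * B = B * W := matfun_comm hG _ hWcomm
  have hB2 : B * B = 1 + (s/4) • (W * W) := by
    rw [hB, matfun_mul]
    have h4 : matfun hG (fun x => Real.sqrt (1 + s / 4 * x) * Real.sqrt (1 + s / 4 * x))
        = matfun hG (fun x => (s/4) * x + 1) := by
      apply matfun_congr
      intro i
      rw [Real.mul_self_sqrt (hbound i)]
      ring
    rw [h4, matfun_affine]
    rw [one_smul, add_comm]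
  set c : ℝ := Real.sqrt s / 2 with hcdef
  have hc2 : c * c = s / 4 := by
    rw [hcdef, div_mul_div_comm, Real.mul_self_sqrt hs0.le]
    norm_num
  set M : Mat n := B + c • W with hM
  have hMT : Mᵀ = B - c • W := by
    rw [hM, transpose_add, transpose_smul, hW, matfun_transpose, smul_neg, ← sub_eq_add_neg]
  have hMTM : Mᵀ * M = 1 := by
    rw [hMT, hM]
    calc (B - c • W) * (B + c • W)
        = B * B + c • (B * W) - c • (W * B) - (c * c) • (W * W) := by
          rw [Matrix.sub_mul, Matrix.mul_add, Matrix.mul_add, Matrix.mul_smul, Matrix.smul_mul,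
            Matrix.smul_mul, Matrix.mul_smul, smul_smul]
          abel
      _ = B * B - (s/4) • (W * W) := by rw [hBcomm, hc2]; abel
      _ = 1 := by rw [hB2]; abel
  have hR : (M * M)ᵀ * (M * M) = 1 := by
    calc (M * M)ᵀ * (M * M) = Mᵀ * ((Mᵀ * M) * M) := by
          rw [transpose_mul]
          simp only [Matrix.mul_assoc]
      _ = 1 := by rw [hMTM, Matrix.one_mul, hMTM]
  have hMM : M * M = B * B + (2*c) • (B * W) + (c*c) • (W * W) := by
    rw [hM, Matrix.add_mul, Matrix.mul_add, Matrix.mul_add, Matrix.mul_smul, Matrix.smul_mul,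
      Matrix.smul_mul, Matrix.mul_smul, smul_smul, hBcomm]
    module
  have hMMT : Mᵀ * Mᵀ = B * B - (2*c) • (B * W) + (c*c) • (W * W) := by
    rw [hMT, Matrix.sub_mul, Matrix.mul_sub, Matrix.mul_sub, Matrix.mul_smul, Matrix.smul_mul,
      Matrix.smul_mul, Matrix.mul_smul, smul_smul, hBcomm]
    module
  refine ⟨M * M, s, hs0, ⟨hR, ?_⟩, ?_⟩
  · have h6 := congrArg Matrix.det hR
    rw [det_mul, det_transpose, det_one] at h6
    have h8 : 0 ≤ (M * M).det := by rw [det_mul]; exact mul_self_nonneg _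
    rcases mul_self_eq_one_iff.mp h6 with h | h
    · exact h
    · rw [det_mul] at h; nlinarith [mul_self_nonneg M.det]
  · calc M * M + (M * M)ᵀ = M * M + Mᵀ * Mᵀ := by rw [transpose_mul]
      _ = (2:ℝ) • (B * B) + (2*(c*c)) • (W * W) := by rw [hMM, hMMT]; module
      _ = (2:ℝ) • (1 : Mat n) + s • (W * W) := by rw [hB2, hc2]; module

end construct
section matching

open scoped Classical in
lemma exists_skew_matching (eig : Fin n → ℝ)
    (hm : Even (Finset.univ.filter (fun i => eig i = -4)).card) :
    ∃ A : Mat n, Aᵀ = -A ∧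
      A * A = -(diagonal (fun i => if eig i = -4 then (1:ℝ) else 0)) ∧
      (∀ i j, A i j ≠ 0 → eig i = -4 ∧ eig j = -4) := by
  set Mset : Finset (Fin n) := Finset.univ.filter (fun i => eig i = -4) with hMset
  obtain ⟨k, hk⟩ := hm
  have hcard : Mset.card = k + k := hk
  set e : {i // i ∈ Mset} ≃ (Fin k ⊕ Fin k) :=
    Mset.equivFin.trans ((finCongr hcard).trans finSumFinEquiv.symm) with he
  set J : Matrix (Fin k ⊕ Fin k) (Fin k ⊕ Fin k) ℝ :=
    Matrix.fromBlocks 0 (-1) 1 0 with hJ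
  have hJT : Jᵀ = -J := by
    rw [hJ, Matrix.fromBlocks_transpose]
    simp [Matrix.fromBlocks_neg]
  have hJJ : J * J = -1 := by
    rw [hJ, Matrix.fromBlocks_multiply]
    simp [Matrix.fromBlocks_neg, ← Matrix.fromBlocks_one]
  set A : Mat n := Matrix.of (fun i j =>
    if hi : i ∈ Mset then (if hj : j ∈ Mset then J (e ⟨i, hi⟩) (e ⟨j, hj⟩) else 0) else 0)
    with hA
  have hmem : ∀ i, i ∈ Mset ↔ eig i = -4 := by
    intro i; simp [hMset]
  have hsupp : ∀ i j, A i j ≠ 0 → eig i = -4 ∧ eig j = -4 := by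
    intro i j hij
    by_contra hcon
    apply hij
    rw [hA]
    by_cases hi : i ∈ Mset
    · by_cases hj : j ∈ Mset
      · exact absurd ⟨(hmem i).mp hi, (hmem j).mp hj⟩ hcon
      · simp [hi, hj]
    · simp [hi]
  refine ⟨A, ?_, ?_, hsupp⟩
  · ext i j
    rw [Matrix.transpose_apply, Matrix.neg_apply, hA]
    by_cases hi : i ∈ Mset <;> by_cases hj : j ∈ Mset <;>
      simp only [Matrix.of_apply, hi, hj, dite_true, dite_false, neg_zero]
    have := congrFun (congrFun hJT (e ⟨i, hi⟩)) (e ⟨j, hj⟩)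
    rw [Matrix.transpose_apply, Matrix.neg_apply] at this
    exact this
  · ext i j
    rw [Matrix.mul_apply, Matrix.neg_apply, Matrix.diagonal_apply]
    by_cases hi : i ∈ Mset
    · by_cases hj : j ∈ Mset
      · have hsum : ∑ l, A i l * A l j
            = ∑ l ∈ Mset, A i l * A l j := by
          refine (Finset.sum_subset (Finset.subset_univ Mset) ?_).symm
          intro l _ hl
          have : A l j = 0 := by rw [hA]; simp [hl]
          rw [this, mul_zero]
        have hsum2 : ∑ l ∈ Mset, A i l * A l j
            = ∑ x : {i // i ∈ Mset}, J (e ⟨i, hi⟩) (e x) * J (e x) (e ⟨j, hj⟩) := by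
          rw [← Finset.sum_coe_sort Mset]
          apply Finset.sum_congr rfl
          intro x _
          rw [hA]
          simp [x.2, hi, hj]
        have hsum3 : ∑ x : {i // i ∈ Mset}, J (e ⟨i, hi⟩) (e x) * J (e x) (e ⟨j, hj⟩)
            = (J * J) (e ⟨i, hi⟩) (e ⟨j, hj⟩) := by
          rw [Matrix.mul_apply]
          exact Equiv.sum_comp e (fun y => J (e ⟨i, hi⟩) y * J y (e ⟨j, hj⟩))
        rw [hsum, hsum2, hsum3, hJJ]
        by_cases hijeq : i = j
        · subst hijeq
          simp [(hmem i).mp hi, Matrix.one_apply]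
        · have hne : e ⟨i, hi⟩ ≠ e ⟨j, hj⟩ := by
            intro hcon
            exact hijeq (congrArg Subtype.val (e.injective hcon))
          simp [Matrix.one_apply, hne, hijeq]
      · have h0 : ∀ l, A i l * A l j = 0 := by
          intro l
          have : A l j = 0 := by
            by_contra hc
            exact hj ((hmem j).mpr (hsupp l j hc).2)
          rw [this, mul_zero]
        rw [Finset.sum_congr rfl fun l _ => h0 l, Finset.sum_const, smul_zero]
        have hij : i ≠ j := fun hcon => hj (hcon ▸ hi)
        simp [hij]
    · have h0 : ∀ l, A i l * A l j = 0 := by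
        intro l
        have : A i l = 0 := by
          by_contra hc
          exact hi ((hmem i).mpr (hsupp i l hc).1)
        rw [this, zero_mul]
      rw [Finset.sum_congr rfl fun l _ => h0 l, Finset.sum_const, smul_zero]
      by_cases hij : i = j
      · subst hij
        have : ¬ eig i = -4 := fun hc => hi ((hmem i).mpr hc)
        simp [this]
      · simp [hij]

end matching
section lemB

lemma matfun_smul {S : Mat n} (hS : S.IsHermitian) (a : ℝ) (f : ℝ → ℝ) :
    matfun hS (fun x => a * f x) = a • matfun hS f := by
  unfold matfun
  rw [show (fun i => a * f (hS.eigenvalues i)) = a • (fun i => f (hS.eigenvalues i)) from rfl,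
    diagonal_smul, Matrix.mul_smul, Matrix.smul_mul]

lemma matfun_one {S : Mat n} (hS : S.IsHermitian) : matfun hS (fun _ => 1) = 1 := by
  have h := matfun_affine hS 0 1
  have h2 := matfun_congr hS (f := fun _ => 1) (g := fun x => 0 * x + 1) (fun i => by ring)
  rw [h2, h]
  simp

lemma exists_skew_sqrt {R : Mat n} (hRo : Rᵀ * R = 1) (hRdet : R.det = 1) :
    ∃ W : Mat n, Wᵀ = -W ∧ W * W = R + Rᵀ - (2:ℝ) • 1 := by
  classical
  have hRRT : R * Rᵀ = 1 := mul_eq_one_comm.mp hRo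
  set S : Mat n := R + Rᵀ - (2:ℝ) • 1 with hSdef
  set K : Mat n := R - Rᵀ with hKdef
  have h2X : ∀ X : Mat n, (2:ℝ) • X = 2 * X := by
    intro X
    rw [two_smul, ← one_add_one_eq_two, Matrix.add_mul, Matrix.one_mul]
  have h4X : ∀ X : Mat n, (4:ℝ) • X = 4 * X := by
    intro X
    rw [show (4:ℝ) = 2 + 2 from by norm_num, add_smul, h2X, ← Matrix.add_mul,
      two_add_two_eq_four]
  have hS_2 : S = R + Rᵀ - 2 := by rw [hSdef, h2X, Matrix.mul_one]
  have hKT : Kᵀ = -K := by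
    rw [hKdef, transpose_sub, transpose_transpose, neg_sub]
  have hKS : K * S = S * K := by
    rw [hKdef, hSdef]
    simp only [Matrix.sub_mul, Matrix.mul_sub, Matrix.mul_add, Matrix.add_mul, Matrix.mul_smul,
      Matrix.smul_mul, Matrix.mul_one, Matrix.one_mul]
    rw [hRo, hRRT]
    module
  have hK2 : K * K = S * S + (4:ℝ) • S := by
    rw [hKdef, hSdef]
    simp only [Matrix.sub_mul, Matrix.mul_sub, Matrix.mul_add, Matrix.add_mul, Matrix.mul_smul,
      Matrix.smul_mul, Matrix.mul_one, Matrix.one_mul]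
    rw [hRo, hRRT]
    module
  have hS4 : S + (4:ℝ) • (1 : Mat n) = (R + 1)ᵀ * (R + 1) := by
    rw [hSdef, transpose_add, transpose_one]
    simp only [Matrix.sub_mul, Matrix.mul_sub, Matrix.mul_add, Matrix.add_mul, Matrix.mul_smul,
      Matrix.smul_mul, Matrix.mul_one, Matrix.one_mul]
    rw [hRo]
    module
  have hS : S.IsHermitian := by
    rw [Matrix.IsHermitian, conjTranspose_eq_transpose_of_trivial, hSdef, transpose_sub,
      transpose_add, transpose_transpose, transpose_smul, transpose_one]
    abel
  have hPSD : ((1:ℝ) • S + (4:ℝ) • (1 : Mat n)).PosSemidef := by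
    rw [one_smul, hS4, ← conjTranspose_eq_transpose_of_trivial]
    exact posSemidef_conjTranspose_mul_self _
  have heig : ∀ i, -4 ≤ hS.eigenvalues i := by
    intro i
    have := eig_bound hS hPSD i
    linarith
  set χ : ℝ → ℝ := fun x => if x = -4 then 1 else 0 with hχ
  set f : ℝ → ℝ := fun x => if x = -4 then 0 else (Real.sqrt (x + 4))⁻¹ with hf
  set Mf : Mat n := matfun hS f with hMf
  set P : Mat n := matfun hS χ with hP
  have hPP : P * P = P := by
    rw [hP, matfun_mul]
    apply matfun_congr
    intro i
    by_cases h : hS.eigenvalues i = -4 <;> simp [hχ, h]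
  have hPT : Pᵀ = P := matfun_transpose hS χ
  have hMfT : Mfᵀ = Mf := matfun_transpose hS f
  have hS4m : S + (4:ℝ) • (1 : Mat n) = matfun hS (fun x => x + 4) := by
    have h1 := matfun_affine hS 1 4
    have h2 := matfun_congr hS (f := fun x => x + 4) (g := fun x => 1 * x + 4) (fun i => by ring)
    rw [h2, h1, one_smul]
  have hRP : R * P = -P := by
    have h0 : ((R + 1) * P)ᵀ * ((R + 1) * P) = 0 := by
      have e1 : ((R + 1) * P)ᵀ * ((R + 1) * P) = P * ((S + (4:ℝ) • 1) * P) := by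
        rw [transpose_mul, hPT, hS4]
        simp only [Matrix.mul_assoc]
      rw [e1, hS4m, hP, matfun_mul, matfun_mul]
      have e2 : matfun hS (fun x => χ x * ((fun x => x + 4) x * χ x)) = matfun hS (fun _ => 0) := by
        apply matfun_congr
        intro i
        by_cases h : hS.eigenvalues i = -4 <;> simp [hχ, h]
      rw [e2, matfun_zero]
    have h1 : (R + 1) * P = 0 := tmul_self_zero h0
    rw [Matrix.add_mul, Matrix.one_mul] at h1
    exact eq_neg_of_add_eq_zero_left h1
  have hRTP : Rᵀ * P = -P := by
    have h1 : Rᵀ * (R * P) = P := by rw [← Matrix.mul_assoc, hRo, Matrix.one_mul]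
    rw [hRP, Matrix.mul_neg] at h1
    exact neg_eq_iff_eq_neg.mp h1
  have hPR : P * R = -P := by
    have h := congrArg Matrix.transpose hRTP
    rwa [transpose_mul, hPT, transpose_transpose, transpose_neg, hPT] at h
  have hPRT : P * Rᵀ = -P := by
    have h := congrArg Matrix.transpose hRP
    rwa [transpose_mul, hPT, transpose_neg, hPT] at h
  have hR'o : (R + (2:ℝ) • P)ᵀ * (R + (2:ℝ) • P) = 1 := by
    rw [transpose_add, transpose_smul, hPT, Matrix.add_mul, Matrix.mul_add, Matrix.mul_add]
    simp only [Matrix.smul_mul, Matrix.mul_smul, smul_smul]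
    rw [hRo, hRTP, hPR, hPP]
    module
  have hR'RT : (R + (2:ℝ) • P) * (R + (2:ℝ) • P)ᵀ = 1 := mul_eq_one_comm.mp hR'o
  have hPR'1 : P * ((R + (2:ℝ) • P) + 1) = (2:ℝ) • P := by
    rw [Matrix.mul_add, Matrix.mul_add, Matrix.mul_smul, hPR, hPP, Matrix.mul_one]
    module
  have hPfact : P = egU hS * diagonal (fun i => χ (hS.eigenvalues i)) * star (egU hS) := rfl
  have hdet4 : ∀ v : Fin n → ℝ, (S + (4:ℝ) • 1) *ᵥ v = 0 → P *ᵥ v = v := by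
    intro v hv
    have e : star (egU hS) * (S + (4:ℝ) • 1)
        = diagonal (fun i => hS.eigenvalues i + 4) * star (egU hS) := by
      rw [hS4m]
      show star (egU hS) * (egU hS * diagonal (fun i => hS.eigenvalues i + 4) * star (egU hS)) = _
      rw [← Matrix.mul_assoc, ← Matrix.mul_assoc, star_mul_egU hS, Matrix.one_mul]
    have h5 : diagonal (fun i => hS.eigenvalues i + 4) *ᵥ (star (egU hS) *ᵥ v) = 0 := by
      rw [Matrix.mulVec_mulVec, ← e, ← Matrix.mulVec_mulVec, hv, Matrix.mulVec_zero]
    have h6 : diagonal (fun i => χ (hS.eigenvalues i)) *ᵥ (star (egU hS) *ᵥ v)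
        = star (egU hS) *ᵥ v := by
      funext i
      have h7 := congrFun h5 i
      rw [Matrix.mulVec_diagonal] at h7
      rw [Matrix.mulVec_diagonal]
      by_cases h : hS.eigenvalues i = -4
      · simp [hχ, h]
      · have hz : (star (egU hS) *ᵥ v) i = 0 := by
          have hne : hS.eigenvalues i + 4 ≠ 0 := fun hc => h (by linarith)
          rcases mul_eq_zero.mp h7 with hc | hc
          · exact absurd hc hne
          · exact hc
        simp [hχ, h, hz]
    calc P *ᵥ v = egU hS *ᵥ (diagonal (fun i => χ (hS.eigenvalues i)) *ᵥ (star (egU hS) *ᵥ v)) := by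
          rw [Matrix.mulVec_mulVec, Matrix.mulVec_mulVec, ← hPfact]
      _ = egU hS *ᵥ (star (egU hS) *ᵥ v) := by rw [h6]
      _ = v := by rw [Matrix.mulVec_mulVec, egU_mul_star hS, Matrix.one_mulVec]
  have hinj : (R + (2:ℝ) • P + 1).det ≠ 0 := by
    intro hdet0
    obtain ⟨v, hv0, hveq⟩ := Matrix.exists_mulVec_eq_zero_iff.mpr hdet0
    have hPv : P *ᵥ v = 0 := by
      have h1 : ((2:ℝ) • P) *ᵥ v = 0 := by
        rw [← hPR'1, ← Matrix.mulVec_mulVec, hveq, Matrix.mulVec_zero]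
      rw [smul_mulVec] at h1
      exact (smul_eq_zero.mp h1).resolve_left (by norm_num)
    have hRv : (R + 1) *ᵥ v = 0 := by
      have e2 : (R + (2:ℝ) • P + 1) = (R + 1) + (2:ℝ) • P := by abel
      rw [e2, Matrix.add_mulVec, smul_mulVec, hPv, smul_zero, add_zero] at hveq
      exact hveq
    have hSv : (S + (4:ℝ) • 1) *ᵥ v = 0 := by
      rw [hS4, ← Matrix.mulVec_mulVec, hRv, Matrix.mulVec_zero]
    have h8 := hdet4 v hSv
    rw [hPv] at h8
    exact hv0 h8.symm
  have hdetR' : (R + (2:ℝ) • P).det = 1 := by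
    have htrick : (R + (2:ℝ) • P + 1).det = (R + (2:ℝ) • P).det * (R + (2:ℝ) • P + 1).det := by
      have e3 : R + (2:ℝ) • P + 1 = (R + (2:ℝ) • P) * (1 + (R + (2:ℝ) • P)ᵀ) := by
        rw [Matrix.mul_add, Matrix.mul_one, hR'RT]
      conv_lhs => rw [e3]
      rw [det_mul, ← det_transpose (1 + (R + (2:ℝ) • P)ᵀ), transpose_add, transpose_transpose,
        transpose_one, add_comm (1 : Mat n) (R + (2:ℝ) • P)]
    have h9 : 1 * (R + (2:ℝ) • P + 1).det = (R + (2:ℝ) • P).det * (R + (2:ℝ) • P + 1).det := by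
      rw [one_mul]; exact htrick
    exact (mul_right_cancel₀ hinj h9).symm
  have hfact : R * ((1:Mat n) + (-2:ℝ) • P) = R + (2:ℝ) • P := by
    rw [Matrix.mul_add, Matrix.mul_one, Matrix.mul_smul, hRP]
    module
  have hmat1 : matfun hS (fun x => 1 + (-2) * χ x) = (1:Mat n) + (-2:ℝ) • P := by
    rw [matfun_add hS (fun _ => 1) (fun x => (-2) * χ x), matfun_one hS, matfun_smul hS (-2) χ,
      hP]
  have hprod : ∏ i, (1 + (-2) * χ (hS.eigenvalues i)) = 1 := by
    have h2' : (R * ((1:Mat n) + (-2:ℝ) • P)).det = 1 := by rw [hfact]; exact hdetR'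
    rw [det_mul, hRdet, one_mul] at h2'
    rw [← matfun_det hS (fun x => 1 + (-2) * χ x), hmat1]
    exact h2'
  have hEven : Even (Finset.univ.filter (fun i => hS.eigenvalues i = -4)).card := by
    have h1 : ∏ i, (1 + (-2) * χ (hS.eigenvalues i))
        = ∏ i, (if hS.eigenvalues i = -4 then (-1:ℝ) else 1) := by
      apply Finset.prod_congr rfl
      intro i _
      by_cases h : hS.eigenvalues i = -4 <;> simp [hχ, h] <;> norm_num
    rw [h1, Finset.prod_ite, Finset.prod_const, Finset.prod_const, one_pow, mul_one] at hprod
    exact (neg_one_pow_eq_one_iff_even (by norm_num : (-1:ℝ) ≠ 1)).mp hprod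
  obtain ⟨A, hAT, hAA, hAsupp⟩ := exists_skew_matching hS.eigenvalues (by
    convert hEven using 3)
  have hW2T : (egU hS * A * star (egU hS))ᵀ = -(egU hS * A * star (egU hS)) := by
    rw [star_eq_conjTranspose, conjTranspose_eq_transpose_of_trivial, transpose_mul,
      transpose_mul, transpose_transpose, hAT]
    simp only [Matrix.neg_mul, Matrix.mul_neg, Matrix.mul_assoc]
  have hW2sq : (egU hS * A * star (egU hS)) * (egU hS * A * star (egU hS)) = -P := by
    calc (egU hS * A * star (egU hS)) * (egU hS * A * star (egU hS))
        = egU hS * (A * ((star (egU hS) * egU hS) * (A * star (egU hS)))) := by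
          simp only [Matrix.mul_assoc]
      _ = egU hS * (A * A * star (egU hS)) := by
          rw [star_mul_egU hS, Matrix.one_mul, Matrix.mul_assoc]
      _ = -P := by
          rw [hAA, hPfact]
          simp only [Matrix.neg_mul, Matrix.mul_neg, Matrix.mul_assoc]
          rfl
  have hDfA : diagonal (fun i => f (hS.eigenvalues i)) * A = 0 := by
    ext i j
    rw [Matrix.diagonal_mul, Matrix.zero_apply]
    by_cases h : A i j = 0
    · rw [h, mul_zero]
    · have h4 := (hAsupp i j h).1
      simp [hf, h4]
  have hMffact : Mf = egU hS * diagonal (fun i => f (hS.eigenvalues i)) * star (egU hS) := rfl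
  have hW1W2 : (K * Mf) * (egU hS * A * star (egU hS)) = 0 := by
    have e : Mf * (egU hS * A * star (egU hS)) = 0 := by
      rw [hMffact]
      calc egU hS * diagonal (fun i => f (hS.eigenvalues i)) * star (egU hS) *
            (egU hS * A * star (egU hS))
          = egU hS * (diagonal (fun i => f (hS.eigenvalues i)) *
              ((star (egU hS) * egU hS) * (A * star (egU hS)))) := by
            simp only [Matrix.mul_assoc]
        _ = egU hS * (diagonal (fun i => f (hS.eigenvalues i)) * A * star (egU hS)) := by
            rw [star_mul_egU hS, Matrix.one_mul, Matrix.mul_assoc]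
        _ = 0 := by rw [hDfA, Matrix.zero_mul, Matrix.mul_zero]
    rw [Matrix.mul_assoc, e, Matrix.mul_zero]
  have hKMf : K * Mf = Mf * K := matfun_comm hS f hKS
  have hW1T : (K * Mf)ᵀ = -(K * Mf) := by
    rw [transpose_mul, hMfT, hKT, Matrix.mul_neg, ← hKMf]
  have hW2W1 : (egU hS * A * star (egU hS)) * (K * Mf) = 0 := by
    have h := congrArg Matrix.transpose hW1W2
    rwa [transpose_mul, hW1T, hW2T, transpose_zero, Matrix.neg_mul, Matrix.mul_neg, neg_neg] at h
  have hKKm : K * K = matfun hS (fun x => x * x + 4 * x) := by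
    have h1 := matfun_mul hS (fun x => x) (fun x => x)
    rw [matfun_id hS] at h1
    have h2 := matfun_smul hS 4 (fun x => x)
    rw [matfun_id hS] at h2
    have h3 := matfun_add hS (fun x => x * x) (fun x => 4 * x)
    rw [hK2, h1, ← h2, h3]
  have hvals : ∀ i, (fun x => (x * x + 4 * x) * (f x * f x)) (hS.eigenvalues i)
      = (fun x => x + 4 * χ x) (hS.eigenvalues i) := by
    intro i
    by_cases h : hS.eigenvalues i = -4
    · simp only [hf, hχ, h, if_pos rfl]
      norm_num
    · have h4 : 0 < hS.eigenvalues i + 4 := by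
        rcases lt_or_eq_of_le (heig i) with h' | h'
        · linarith
        · exact absurd h'.symm h
      simp only [hf, hχ, if_neg h]
      rw [← mul_inv, Real.mul_self_sqrt h4.le]
      field_simp
      ring
  have hW1sq : (K * Mf) * (K * Mf) = S + (4:ℝ) • P := by
    calc (K * Mf) * (K * Mf) = K * ((Mf * K) * Mf) := by simp only [Matrix.mul_assoc]
      _ = K * ((K * Mf) * Mf) := by rw [← hKMf]
      _ = (K * K) * (Mf * Mf) := by simp only [Matrix.mul_assoc]
      _ = matfun hS (fun x => x * x + 4 * x) * matfun hS (fun x => f x * f x) := by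
          rw [hKKm, hMf, matfun_mul]
      _ = matfun hS (fun x => (x * x + 4 * x) * (f x * f x)) := matfun_mul hS _ _
      _ = matfun hS (fun x => x + 4 * χ x) := matfun_congr hS hvals
      _ = S + (4:ℝ) • P := by
          rw [matfun_add hS (fun x => x) (fun x => 4 * χ x), matfun_id hS,
            matfun_smul hS 4 χ, hP]
  refine ⟨K * Mf + (2:ℝ) • (egU hS * A * star (egU hS)), ?_, ?_⟩
  · rw [transpose_add, transpose_smul, hW1T, hW2T]
    module
  · rw [Matrix.add_mul, Matrix.mul_add, Matrix.mul_add]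
    simp only [Matrix.smul_mul, Matrix.mul_smul, smul_smul]
    rw [hW1sq, hW1W2, hW2W1, hW2sq, hSdef]
    module

end lemB

/-- If `I` maximizes `F` over `SO(n)`, then the maximizer is unique (`𝓡 = {I}`) if and only
if `F(W²) < 0` for every nonzero skew-symmetric `W`. -/
theorem optRot_singleton_iff_strict (n : ℕ)
    (F : Matrix (Fin n) (Fin n) ℝ →ₗ[ℝ] ℝ)
    (hI : (1 : Matrix (Fin n) (Fin n) ℝ) ∈ optRot n F) :
    optRot n F = {1} ↔
      ∀ W : Matrix (Fin n) (Fin n) ℝ, Wᵀ = -W → W ≠ 0 → F (W * W) < 0 := by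
  constructor
  · intro huniq W hWT hW0
    obtain ⟨hfirst, hsecond⟩ := first_second_order hI hWT
    rcases lt_or_eq_of_le hsecond with hlt | heq
    · exact hlt
    · exfalso
      obtain ⟨R, s, hs0, hRSO, hsym⟩ := exists_rot_of_skew hWT
      have hRskew : (R - Rᵀ)ᵀ = -(R - Rᵀ) := by
        rw [transpose_sub, transpose_transpose, neg_sub]
      have hFRT : F (R - Rᵀ) = 0 := (first_second_order hI hRskew).1
      have hsplit : R = (1/2 : ℝ) • (R + Rᵀ) + (1/2 : ℝ) • (R - Rᵀ) := by module
      have hFR : F R = F 1 := by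
        calc F R = (1/2:ℝ) * F (R + Rᵀ) + (1/2:ℝ) * F (R - Rᵀ) := by
              conv_lhs => rw [hsplit]
              rw [map_add, _root_.map_smul, _root_.map_smul, smul_eq_mul, smul_eq_mul]
          _ = (1/2:ℝ) * ((2:ℝ) * F 1 + s * F (W * W)) + (1/2:ℝ) * 0 := by
              rw [hFRT, hsym, map_add, _root_.map_smul, _root_.map_smul, smul_eq_mul, smul_eq_mul]
          _ = F 1 := by rw [heq]; ring
      have hmem : R ∈ optRot n F := ⟨hRSO, fun Q hQ => (hI.2 Q hQ).trans (le_of_eq hFR.symm)⟩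
      rw [huniq, Set.mem_singleton_iff] at hmem
      rw [hmem, transpose_one] at hsym
      have h0 : s • (W * W) = 0 := by
        have h2 : ((2:ℝ) • (1 : Matrix (Fin n) (Fin n) ℝ)) = 1 + 1 := by rw [two_smul]
        rw [h2] at hsym
        exact (add_eq_left.mp hsym.symm)
      have hWW0 : W * W = 0 := by
        rcases smul_eq_zero.mp h0 with h | h
        · exact absurd h hs0.ne'
        · exact h
      apply hW0
      apply tmul_self_zero
      rw [hWT, Matrix.neg_mul, hWW0, neg_zero]
  · intro hstrict
    apply Set.eq_singleton_iff_unique_mem.mpr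
    refine ⟨hI, ?_⟩
    intro R hR
    obtain ⟨W, hWT, hWW⟩ := exists_skew_sqrt hR.1.1 hR.1.2
    by_contra hne
    have hW0 : W ≠ 0 := by
      intro h
      apply hne
      rw [h, Matrix.zero_mul] at hWW
      have h2 : R + Rᵀ = (2:ℝ) • 1 := by
        have h2' := hWW.symm
        rwa [sub_eq_zero] at h2'
      have h3 : (R - 1)ᵀ * (R - 1) = (2:ℝ) • 1 - (R + Rᵀ) := by
        rw [transpose_sub, transpose_one]
        simp only [Matrix.sub_mul, Matrix.mul_sub, Matrix.mul_one, Matrix.one_mul]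
        rw [hR.1.1]
        module
      have h1 : (R - 1)ᵀ * (R - 1) = 0 := by rw [h3, h2, sub_self]
      have h4 := tmul_self_zero h1
      rwa [sub_eq_zero] at h4
    have hlt := hstrict W hWT hW0
    have hF1R : F R = F 1 := le_antisymm (hI.2 R hR.1) (hR.2 1 hI.1)
    have hRskew : (R - Rᵀ)ᵀ = -(R - Rᵀ) := by
      rw [transpose_sub, transpose_transpose, neg_sub]
    have hFK : F (R - Rᵀ) = 0 := (first_second_order hI hRskew).1
    have hFRT : F Rᵀ = F R := by
      have h5 := map_sub F R Rᵀ
      rw [hFK] at h5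
      linarith
    have hzero : F (W * W) = 0 := by
      rw [hWW, map_sub, map_add, _root_.map_smul, hFRT, hF1R, smul_eq_mul]
      ring
    linarith
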